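/- Let Γ be a group and let S and S′ be two finite generating sets of Γ, neither containing the identity. Then there exists d such that every finite induced subgraph of Cay(Γ, S) has twin-width at most d if and only if there exists d′ such that every finite induced subgraph of Cay(Γ, S′) has twin-width at most d′. (Having bounded twin-width is a group invariant, independent of the chosen finite generating set.) -/

import Mathlib

/-- A trigraph: a finite vertex set with disjoint black and red edge sets. -/
structure Trigraph (V : Type*) where
  verts : Finset V
  black : V → V → Prop
  red : V → V → Prop
  black_symm : ∀ u v, black u v → black v u
  red_symm : ∀ u v, red u v → red v u
  black_irrefl : ∀ u, ¬ black u u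
  red_irrefl : ∀ u, ¬ red u u
  black_red_disjoint : ∀ u v, black u v → ¬ red u v
  black_mem : ∀ u v, black u v → u ∈ verts ∧ v ∈ verts
  red_mem : ∀ u v, red u v → u ∈ verts ∧ v ∈ verts

namespace Trigraph

variable {V : Type*} [DecidableEq V]

/-- The red degree of a vertex. -/
noncomputable def redDeg (G : Trigraph V) (x : V) : ℕ := {y | G.red x y}.ncard

/-- `G` is a `d`-trigraph: every vertex is incident to at most `d` red edges. -/
def RedDegLE (G : Trigraph V) (d : ℕ) : Prop := ∀ x, G.redDeg x ≤ d

/-- `G'` is obtained from `G` by contracting the two distinct vertices `u` and `v`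
(the contracted vertex is represented by `u`, and `v` is deleted). -/
def IsContractionAt (G G' : Trigraph V) (u v : V) : Prop :=
  u ∈ G.verts ∧ v ∈ G.verts ∧ u ≠ v ∧
  G'.verts = G.verts.erase v ∧
  (∀ x y, x ≠ u → y ≠ u → (G'.black x y ↔ (G.black x y ∧ x ≠ v ∧ y ≠ v))) ∧
  (∀ x y, x ≠ u → y ≠ u → (G'.red x y ↔ (G.red x y ∧ x ≠ v ∧ y ≠ v))) ∧
  (∀ x, x ≠ u → x ≠ v → (G'.black u x ↔ (G.black u x ∧ G.black v x))) ∧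
  (∀ x, x ≠ u → x ≠ v →
    (G'.red u x ↔
      ((G.black u x ∨ G.red u x ∨ G.black v x ∨ G.red v x) ∧ ¬ (G.black u x ∧ G.black v x))))

/-- `G'` is obtained from `G` by contracting some pair of vertices. -/
def IsContraction (G G' : Trigraph V) : Prop := ∃ u v, IsContractionAt G G' u v

/-- `G` admits a `d`-sequence: a sequence `G = G_n, …, G_1` of `d`-trigraphs, each obtained
from the previous one by a contraction, ending in a one-vertex trigraph. -/
def HasSeq (G : Trigraph V) (d : ℕ) : Prop :=
  ∃ f : ℕ → Trigraph V,
    f G.verts.card = G ∧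
    (∀ i, 1 ≤ i → i < G.verts.card → IsContraction (f (i + 1)) (f i)) ∧
    (∀ i, 1 ≤ i → i ≤ G.verts.card → (f i).RedDegLE d)

/-- The twin-width of a trigraph: the least `d` such that it admits a `d`-sequence. -/
noncomputable def tww (G : Trigraph V) : ℕ := sInf {d | G.HasSeq d}

end Trigraph

/-- The trigraph induced by a simple graph `G` on the vertex set `s`: all edges black. -/
def SimpleGraph.toTrigraphOn {V : Type*} (G : SimpleGraph V) (s : Finset V) : Trigraph V where
  verts := s
  black u v := G.Adj u v ∧ u ∈ s ∧ v ∈ s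
  red _ _ := False
  black_symm := fun _ _ ⟨h, hu, hv⟩ => ⟨h.symm, hv, hu⟩
  red_symm := fun _ _ h => h.elim
  black_irrefl := fun u h => G.loopless.irrefl u h.1
  red_irrefl := fun _ h => h
  black_red_disjoint := fun _ _ _ h => h
  black_mem := fun _ _ ⟨_, hu, hv⟩ => ⟨hu, hv⟩
  red_mem := fun _ _ h => h.elim

/-- The trigraph associated to a finite simple graph: all edges black. -/
def SimpleGraph.toTrigraph {V : Type*} [Fintype V] (G : SimpleGraph V) : Trigraph V :=
  G.toTrigraphOn Finset.univ

/-- The Cayley graph of a group `Γ` with respect to a set `S` of generators. -/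
def cayley (Γ : Type*) [Group Γ] (S : Finset Γ) : SimpleGraph Γ where
  Adj x y := x ≠ y ∧ ∃ s ∈ S, y = x * s ∨ x = y * s
  symm := ⟨by rintro x y ⟨hne, s, hs, h⟩; exact ⟨hne.symm, s, hs, h.symm⟩⟩
  loopless := ⟨fun x h => h.1 rfl⟩


open scoped Classical

namespace TwwAux

variable {V : Type*} [DecidableEq V]

set_option linter.unusedSectionVars false

lemma trigraph_ext {G H : Trigraph V} (hv : G.verts = H.verts)
    (hb : ∀ x y, G.black x y ↔ H.black x y) (hr : ∀ x y, G.red x y ↔ H.red x y) : G = H := by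
  obtain ⟨v1, b1, r1, _, _, _, _, _, _, _⟩ := G
  obtain ⟨v2, b2, r2, _, _, _, _, _, _, _⟩ := H
  simp only at hv hb hr
  have hb' : b1 = b2 := funext fun x => funext fun y => propext (hb x y)
  have hr' : r1 = r2 := funext fun x => funext fun y => propext (hr x y)
  subst hv hb' hr'
  rfl

/-- The explicit contraction of `u, v` in `G` (merged vertex named `u`). -/
def contractT (G : Trigraph V) (u v : V) : Trigraph V where
  verts := G.verts.erase v
  black x y :=
    (x ≠ u ∧ y ≠ u ∧ G.black x y ∧ x ≠ v ∧ y ≠ v) ∨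
    (x = u ∧ x ≠ v ∧ y ≠ u ∧ y ≠ v ∧ G.black u y ∧ G.black v y) ∨
    (y = u ∧ y ≠ v ∧ x ≠ u ∧ x ≠ v ∧ G.black u x ∧ G.black v x)
  red x y :=
    (x ≠ u ∧ y ≠ u ∧ G.red x y ∧ x ≠ v ∧ y ≠ v) ∨
    (x = u ∧ x ≠ v ∧ y ≠ u ∧ y ≠ v ∧ u ∈ G.verts ∧
      ((G.black u y ∨ G.red u y ∨ G.black v y ∨ G.red v y) ∧ ¬ (G.black u y ∧ G.black v y))) ∨
    (y = u ∧ y ≠ v ∧ x ≠ u ∧ x ≠ v ∧ u ∈ G.verts ∧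
      ((G.black u x ∨ G.red u x ∨ G.black v x ∨ G.red v x) ∧ ¬ (G.black u x ∧ G.black v x)))
  black_symm := by
    rintro a b (⟨h1, h2, h3, h4, h5⟩ | ⟨h1, h2, h3, h4, h5, h6⟩ | ⟨h1, h2, h3, h4, h5, h6⟩)
    · exact Or.inl ⟨h2, h1, G.black_symm _ _ h3, h5, h4⟩
    · exact Or.inr (Or.inr ⟨h1, h2, h3, h4, h5, h6⟩)
    · exact Or.inr (Or.inl ⟨h1, h2, h3, h4, h5, h6⟩)
  red_symm := by
    rintro a b (⟨h1, h2, h3, h4, h5⟩ | ⟨h1, h2, h3, h4, h5, h6⟩ | ⟨h1, h2, h3, h4, h5, h6⟩)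
    · exact Or.inl ⟨h2, h1, G.red_symm _ _ h3, h5, h4⟩
    · exact Or.inr (Or.inr ⟨h1, h2, h3, h4, h5, h6⟩)
    · exact Or.inr (Or.inl ⟨h1, h2, h3, h4, h5, h6⟩)
  black_irrefl := by
    rintro a (⟨h1, h2, h3, h4, h5⟩ | ⟨h1, h2, h3, h4, h5, h6⟩ | ⟨h1, h2, h3, h4, h5, h6⟩)
    · exact G.black_irrefl a h3
    · exact h3 h1
    · exact h3 h1
  red_irrefl := by
    rintro a (⟨h1, h2, h3, h4, h5⟩ | ⟨h1, h2, h3, h4, h5, h6⟩ | ⟨h1, h2, h3, h4, h5, h6⟩)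
    · exact G.red_irrefl a h3
    · exact h3 h1
    · exact h3 h1
  black_red_disjoint := by
    rintro a b hb hr
    rcases hb with ⟨b1, b2, b3, b4, b5⟩ | ⟨b1, b2, b3, b4, b5, b6⟩ | ⟨b1, b2, b3, b4, b5, b6⟩ <;>
      rcases hr with ⟨r1, r2, r3, r4, r5⟩ | ⟨r1, r2, r3, r4, r0, r5⟩ | ⟨r1, r2, r3, r4, r0, r5⟩ <;>
      first
        | exact G.black_red_disjoint _ _ b3 r3
        | exact r5.2 ⟨b5, b6⟩
        | exact b1 r1
        | exact b2 r1
        | exact r1 b1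
        | exact r2 b1
        | exact r3 b1
        | exact b3 r1
  black_mem := by
    rintro a b (⟨h1, h2, h3, h4, h5⟩ | ⟨h1, h2, h3, h4, h5, h6⟩ | ⟨h1, h2, h3, h4, h5, h6⟩)
    · exact ⟨Finset.mem_erase.2 ⟨h4, (G.black_mem _ _ h3).1⟩,
        Finset.mem_erase.2 ⟨h5, (G.black_mem _ _ h3).2⟩⟩
    · exact ⟨Finset.mem_erase.2 ⟨h1 ▸ h2, h1 ▸ (G.black_mem _ _ h5).1⟩,
        Finset.mem_erase.2 ⟨h4, (G.black_mem _ _ h5).2⟩⟩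
    · exact ⟨Finset.mem_erase.2 ⟨h4, (G.black_mem _ _ h5).2⟩,
        Finset.mem_erase.2 ⟨h1 ▸ h2, h1 ▸ (G.black_mem _ _ h5).1⟩⟩
  red_mem := by
    rintro a b (⟨h1, h2, h3, h4, h5⟩ | ⟨h1, h2, h3, h4, h5, h6⟩ | ⟨h1, h2, h3, h4, h5, h6⟩)
    · exact ⟨Finset.mem_erase.2 ⟨h4, (G.red_mem _ _ h3).1⟩,
        Finset.mem_erase.2 ⟨h5, (G.red_mem _ _ h3).2⟩⟩
    · refine ⟨Finset.mem_erase.2 ⟨h1 ▸ h2, h1 ▸ h5⟩, Finset.mem_erase.2 ⟨h4, ?_⟩⟩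
      rcases h6.1 with h | h | h | h
      · exact (G.black_mem _ _ h).2
      · exact (G.red_mem _ _ h).2
      · exact (G.black_mem _ _ h).2
      · exact (G.red_mem _ _ h).2
    · refine ⟨Finset.mem_erase.2 ⟨h4, ?_⟩, Finset.mem_erase.2 ⟨h1 ▸ h2, h1 ▸ h5⟩⟩
      rcases h6.1 with h | h | h | h
      · exact (G.black_mem _ _ h).2
      · exact (G.red_mem _ _ h).2
      · exact (G.black_mem _ _ h).2
      · exact (G.red_mem _ _ h).2

lemma contract_isContractionAt {G : Trigraph V} {u v : V} (hu : u ∈ G.verts) (hv : v ∈ G.verts)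
    (huv : u ≠ v) : G.IsContractionAt (contractT G u v) u v := by
  refine ⟨hu, hv, huv, rfl, ?_, ?_, ?_, ?_⟩
  · intro x y hx hy
    constructor
    · rintro (⟨h1, h2, h3, h4, h5⟩ | ⟨h1, h2, h3, h4, h5, h6⟩ | ⟨h1, h2, h3, h4, h5, h6⟩)
      · exact ⟨h3, h4, h5⟩
      · exact absurd h1 hx
      · exact absurd h1 hy
    · rintro ⟨h1, h2, h3⟩
      exact Or.inl ⟨hx, hy, h1, h2, h3⟩
  · intro x y hx hy
    constructor
    · rintro (⟨h1, h2, h3, h4, h5⟩ | ⟨h1, h2, h3, h4, h5, h6⟩ | ⟨h1, h2, h3, h4, h5, h6⟩)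
      · exact ⟨h3, h4, h5⟩
      · exact absurd h1 hx
      · exact absurd h1 hy
    · rintro ⟨h1, h2, h3⟩
      exact Or.inl ⟨hx, hy, h1, h2, h3⟩
  · intro x hx hxv
    constructor
    · rintro (⟨h1, h2, h3, h4, h5⟩ | ⟨h1, h2, h3, h4, h5, h6⟩ | ⟨h1, h2, h3, h4, h5, h6⟩)
      · exact absurd rfl h1
      · exact ⟨h5, h6⟩
      · exact absurd h1 hx
    · rintro ⟨h1, h2⟩
      exact Or.inr (Or.inl ⟨rfl, huv, hx, hxv, h1, h2⟩)
  · intro x hx hxv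
    constructor
    · rintro (⟨h1, h2, h3, h4, h5⟩ | ⟨h1, h2, h3, h4, h5, h6⟩ | ⟨h1, h2, h3, h4, h5, h6⟩)
      · exact absurd rfl h1
      · exact h6
      · exact absurd h1 hx
    · rintro h
      exact Or.inr (Or.inl ⟨rfl, huv, hx, hxv, hu, h⟩)

lemma contraction_unique {G G₁ G₂ : Trigraph V} {u v : V}
    (h1 : G.IsContractionAt G₁ u v) (h2 : G.IsContractionAt G₂ u v) : G₁ = G₂ := by
  obtain ⟨hu, hv, huv, hV1, hb1, hr1, hbu1, hru1⟩ := h1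
  obtain ⟨-, -, -, hV2, hb2, hr2, hbu2, hru2⟩ := h2
  have hbs : ∀ (T : Trigraph V) x y, T.black x y ↔ T.black y x :=
    fun T x y => ⟨T.black_symm x y, T.black_symm y x⟩
  have hrs : ∀ (T : Trigraph V) x y, T.red x y ↔ T.red y x :=
    fun T x y => ⟨T.red_symm x y, T.red_symm y x⟩
  have keyb : ∀ x, x ≠ u → (G₁.black u x ↔ G₂.black u x) := by
    intro x hx
    by_cases hxv : x = v
    · subst hxv
      constructor
      · intro h
        exact absurd (hV1 ▸ (G₁.black_mem _ _ h).2) (fun hm => (Finset.mem_erase.1 hm).1 rfl)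
      · intro h
        exact absurd (hV2 ▸ (G₂.black_mem _ _ h).2) (fun hm => (Finset.mem_erase.1 hm).1 rfl)
    · rw [hbu1 x hx hxv, hbu2 x hx hxv]
  have keyr : ∀ x, x ≠ u → (G₁.red u x ↔ G₂.red u x) := by
    intro x hx
    by_cases hxv : x = v
    · subst hxv
      constructor
      · intro h
        exact absurd (hV1 ▸ (G₁.red_mem _ _ h).2) (fun hm => (Finset.mem_erase.1 hm).1 rfl)
      · intro h
        exact absurd (hV2 ▸ (G₂.red_mem _ _ h).2) (fun hm => (Finset.mem_erase.1 hm).1 rfl)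
    · rw [hru1 x hx hxv, hru2 x hx hxv]
  refine trigraph_ext (hV1.trans hV2.symm) ?_ ?_
  · intro x y
    by_cases hx : x = u
    · rw [hx]
      by_cases hy : y = u
      · rw [hy]
        exact iff_of_false (G₁.black_irrefl u) (G₂.black_irrefl u)
      · exact keyb y hy
    · by_cases hy : y = u
      · rw [hy, hbs G₁, hbs G₂]
        exact keyb x hx
      · rw [hb1 x y hx hy, hb2 x y hx hy]
  · intro x y
    by_cases hx : x = u
    · rw [hx]
      by_cases hy : y = u
      · rw [hy]
        exact iff_of_false (G₁.red_irrefl u) (G₂.red_irrefl u)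
      · exact keyr y hy
    · by_cases hy : y = u
      · rw [hy, hrs G₁, hrs G₂]
        exact keyr x hx
      · rw [hr1 x y hx hy, hr2 x y hx hy]

lemma card_of_contractionAt {G G' : Trigraph V} {u v : V} (h : G.IsContractionAt G' u v) :
    G'.verts.card = G.verts.card - 1 := by
  obtain ⟨hu, hv, huv, hverts, -⟩ := h
  rw [hverts, Finset.card_erase_of_mem hv]

lemma hasSeq_mono {G : Trigraph V} {d e : ℕ} (h : G.HasSeq d) (hde : d ≤ e) : G.HasSeq e := by
  obtain ⟨f, h1, h2, h3⟩ := h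
  exact ⟨f, h1, h2, fun i hi hi' x => le_trans (h3 i hi hi' x) hde⟩

lemma redDegLE_card (G : Trigraph V) : G.RedDegLE G.verts.card := by
  intro x
  have hsub : {y | G.red x y} ⊆ (G.verts : Set V) := fun y hy => (G.red_mem _ _ hy).2
  calc {y | G.red x y}.ncard ≤ (G.verts : Set V).ncard :=
        Set.ncard_le_ncard hsub G.verts.finite_toSet
    _ = G.verts.card := Set.ncard_coe_finset _

lemma hasSeq_of_card_le_one (G : Trigraph V) (h : G.verts.card ≤ 1) (d : ℕ) : G.HasSeq d := by
  refine ⟨fun _ => G, rfl, fun i hi hilt => absurd (lt_of_lt_of_le hilt h) (by omega), ?_⟩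
  intro i hi hile x
  have hempty : {y | G.red x y} = ∅ := by
    ext y
    simp only [Set.mem_setOf_eq, Set.mem_empty_iff_false, iff_false]
    intro hred
    have hxy : x = y := Finset.card_le_one.1 h x (G.red_mem _ _ hred).1 y (G.red_mem _ _ hred).2
    exact G.red_irrefl x (hxy ▸ hred)
  simp [Trigraph.redDeg, hempty]

lemma hasSeq_step {G G' : Trigraph V} {u v : V} {d : ℕ} (h : G.IsContractionAt G' u v)
    (hred : G.RedDegLE d) (h' : G'.HasSeq d) : G.HasSeq d := by
  obtain ⟨f, hf, hstep, hbd⟩ := h'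
  have hcard : G'.verts.card = G.verts.card - 1 := card_of_contractionAt h
  have hge2 : 2 ≤ G.verts.card := by
    have := h.1; have := h.2.1; have := h.2.2.1
    exact Finset.one_lt_card.2 ⟨u, h.1, v, h.2.1, h.2.2.1⟩
  refine ⟨fun i => if i = G.verts.card then G else f i, by simp, ?_, ?_⟩
  · intro i hi hilt
    by_cases hieq : i + 1 = G.verts.card
    · have hi' : i ≠ G.verts.card := by omega
      have : i = G'.verts.card := by omega
      simp only [hieq, if_pos rfl, if_neg hi']
      rw [this, hf]
      exact ⟨u, v, h⟩
    · have hi' : i ≠ G.verts.card := by omega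
      simp only [if_neg hieq, if_neg hi']
      exact hstep i hi (by omega)
  · intro i hi hile
    by_cases hieq : i = G.verts.card
    · simpa [hieq] using hred
    · simp only [if_neg hieq]
      exact hbd i hi (by omega)

lemma hasSeq_card : ∀ n : ℕ, ∀ G : Trigraph V, G.verts.card = n → G.HasSeq n := by
  intro n
  induction n using Nat.strong_induction_on with
  | _ n ih =>
    intro G hG
    rcases le_or_gt n 1 with h | h
    · exact hasSeq_of_card_le_one G (hG ▸ h) n
    · obtain ⟨a, ha, b, hb, hab⟩ := Finset.one_lt_card.1 (hG ▸ h)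
      have hC := contract_isContractionAt ha hb hab
      have hcard : (contractT G a b).verts.card = n - 1 := by
        rw [card_of_contractionAt hC, hG]
      have h' := ih (n - 1) (by omega) _ hcard
      exact hasSeq_step hC (hG ▸ redDegLE_card G) (hasSeq_mono h' (by omega))

lemma tww_le {G : Trigraph V} {d : ℕ} (h : G.HasSeq d) : G.tww ≤ d := Nat.sInf_le h

lemma hasSeq_of_tww_le {G : Trigraph V} {d : ℕ} (h : G.tww ≤ d) : G.HasSeq d := by
  have hne : {d | G.HasSeq d}.Nonempty := ⟨G.verts.card, hasSeq_card _ G rfl⟩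
  exact hasSeq_mono (Nat.sInf_mem hne) h

end TwwAux

/-! ### Quotient trigraphs of simple graphs -/

namespace TwwAux2
open TwwAux

variable {V : Type*} [DecidableEq V]

set_option linter.unusedSectionVars false

/-- The quotient trigraph of the simple graph `G` restricted to `s`, under the
representative map `ψ`. -/
def quotT (G : SimpleGraph V) (s : Finset V) (ψ : V → V) : Trigraph V where
  verts := s.image ψ
  black a b := a ≠ b ∧ a ∈ s.image ψ ∧ b ∈ s.image ψ ∧
    ∀ x ∈ s, ∀ y ∈ s, ψ x = a → ψ y = b → G.Adj x y
  red a b := a ≠ b ∧ a ∈ s.image ψ ∧ b ∈ s.image ψ ∧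
    (∃ x ∈ s, ∃ y ∈ s, ψ x = a ∧ ψ y = b ∧ G.Adj x y) ∧
    ¬ ∀ x ∈ s, ∀ y ∈ s, ψ x = a → ψ y = b → G.Adj x y
  black_symm := by
    rintro a b ⟨h1, h2, h3, h4⟩
    exact ⟨h1.symm, h3, h2, fun x hx y hy e1 e2 => (h4 y hy x hx e2 e1).symm⟩
  red_symm := by
    rintro a b ⟨h1, h2, h3, ⟨x, hx, y, hy, e1, e2, hadj⟩, h5⟩
    refine ⟨h1.symm, h3, h2, ⟨y, hy, x, hx, e2, e1, hadj.symm⟩, fun hc => h5 ?_⟩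
    exact fun x hx y hy e1 e2 => (hc y hy x hx e2 e1).symm
  black_irrefl := fun a h => h.1 rfl
  red_irrefl := fun a h => h.1 rfl
  black_red_disjoint := fun a b hb hr => hr.2.2.2.2 hb.2.2.2
  black_mem := fun a b h => ⟨h.2.1, h.2.2.1⟩
  red_mem := fun a b h => ⟨h.2.1, h.2.2.1⟩

lemma quotT_verts (G : SimpleGraph V) (s : Finset V) (ψ : V → V) :
    (quotT G s ψ).verts = s.image ψ := rfl

lemma quotT_black (G : SimpleGraph V) (s : Finset V) (ψ : V → V) (a b : V) :
    (quotT G s ψ).black a b ↔ (a ≠ b ∧ a ∈ s.image ψ ∧ b ∈ s.image ψ ∧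
      ∀ x ∈ s, ∀ y ∈ s, ψ x = a → ψ y = b → G.Adj x y) := Iff.rfl

lemma quotT_red (G : SimpleGraph V) (s : Finset V) (ψ : V → V) (a b : V) :
    (quotT G s ψ).red a b ↔ (a ≠ b ∧ a ∈ s.image ψ ∧ b ∈ s.image ψ ∧
      (∃ x ∈ s, ∃ y ∈ s, ψ x = a ∧ ψ y = b ∧ G.Adj x y) ∧
      ¬ ∀ x ∈ s, ∀ y ∈ s, ψ x = a → ψ y = b → G.Adj x y) := Iff.rfl

/-- Merging map: redirect class `b` to `a`. -/
def mrg (ψ : V → V) (b a : V) : V → V := fun x => if ψ x = b then a else ψ x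

structure Good (s : Finset V) (ψ : V → V) : Prop where
  maps : ∀ x ∈ s, ψ x ∈ s
  idem : ∀ x ∈ s, ψ (ψ x) = ψ x

lemma good_id (s : Finset V) : Good s (id : V → V) := ⟨fun x hx => hx, fun _ _ => rfl⟩

lemma rep_self {s : Finset V} {ψ : V → V} (hg : Good s ψ) {a : V} (ha : a ∈ s.image ψ) :
    a ∈ s ∧ ψ a = a := by
  obtain ⟨x, hx, rfl⟩ := Finset.mem_image.1 ha
  exact ⟨hg.maps x hx, hg.idem x hx⟩

lemma good_mrg {s : Finset V} {ψ : V → V} (hg : Good s ψ) {a b : V}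
    (ha : a ∈ s.image ψ) (hab : a ≠ b) : Good s (mrg ψ b a) := by
  obtain ⟨has, hψa⟩ := rep_self hg ha
  constructor
  · intro x hx
    unfold mrg
    split
    · exact has
    · exact hg.maps x hx
  · intro x hx
    unfold mrg
    split
    · simp [hψa, hab]
    · next h => simp [hg.idem x hx, h]

lemma mrg_eq_iff {s : Finset V} {ψ : V → V} (hg : Good s ψ) {a b : V}
    (hab : a ≠ b) {x : V} (hx : x ∈ s) {c : V} (hca : c ≠ a) (hcb : c ≠ b) :
    (mrg ψ b a x = c ↔ ψ x = c) := by
  unfold mrg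
  split
  · next h =>
      rw [h]
      exact iff_of_false (fun h' => hca h'.symm) (fun h' => hcb h'.symm)
  · exact Iff.rfl

lemma mrg_eq_a_iff {s : Finset V} {ψ : V → V} (hg : Good s ψ) {a b : V}
    (hab : a ≠ b) {x : V} (hx : x ∈ s) :
    (mrg ψ b a x = a ↔ (ψ x = a ∨ ψ x = b)) := by
  unfold mrg
  split
  · next h => simp [h]
  · next h => simp [h]

lemma mem_image_mrg {s : Finset V} {ψ : V → V} (hg : Good s ψ) {a b : V}
    (ha : a ∈ s.image ψ) (hb : b ∈ s.image ψ) (hab : a ≠ b) :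
    s.image (mrg ψ b a) = (s.image ψ).erase b := by
  obtain ⟨has, hψa⟩ := rep_self hg ha
  ext c
  simp only [Finset.mem_image, Finset.mem_erase]
  constructor
  · rintro ⟨x, hx, rfl⟩
    unfold mrg
    split
    · next h => exact ⟨hab, Finset.mem_image.1 ha⟩
    · next h => exact ⟨h, x, hx, rfl⟩
  · rintro ⟨hcb, x, hx, rfl⟩
    refine ⟨x, hx, ?_⟩
    unfold mrg
    rw [if_neg hcb]

lemma mem_image_mrg' {s : Finset V} {ψ : V → V} (hg : Good s ψ) {a b : V}
    (ha : a ∈ s.image ψ) (hb : b ∈ s.image ψ) (hab : a ≠ b) (c : V) :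
    c ∈ s.image (mrg ψ b a) ↔ (c ∈ s.image ψ ∧ c ≠ b) := by
  rw [mem_image_mrg hg ha hb hab, Finset.mem_erase, and_comm]

lemma quot_contract (G : SimpleGraph V) (s : Finset V) {ψ : V → V} (hg : Good s ψ)
    {a b : V} (ha : a ∈ s.image ψ) (hb : b ∈ s.image ψ) (hab : a ≠ b) :
    (quotT G s ψ).IsContractionAt (quotT G s (mrg ψ b a)) a b := by
  obtain ⟨has, hψa⟩ := rep_self hg ha
  obtain ⟨hbs, hψb⟩ := rep_self hg hb
  have hm := mem_image_mrg' hg ha hb hab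
  have hcl : ∀ x ∈ s, ∀ c, c ≠ a → c ≠ b → (mrg ψ b a x = c ↔ ψ x = c) :=
    fun x hx c hca hcb => mrg_eq_iff hg hab hx hca hcb
  have hcla : ∀ x ∈ s, (mrg ψ b a x = a ↔ (ψ x = a ∨ ψ x = b)) :=
    fun x hx => mrg_eq_a_iff hg hab hx
  refine ⟨ha, hb, hab, mem_image_mrg hg ha hb hab, ?_, ?_, ?_, ?_⟩
  · -- black away from a
    intro x y hxa hya
    constructor
    · rintro ⟨hxy, hx', hy', hcomp⟩
      obtain ⟨hx, hxb⟩ := (hm x).1 hx'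
      obtain ⟨hy, hyb⟩ := (hm y).1 hy'
      refine ⟨⟨hxy, hx, hy, ?_⟩, hxb, hyb⟩
      intro z hz w hw e1 e2
      exact hcomp z hz w hw ((hcl z hz x hxa hxb).2 e1) ((hcl w hw y hya hyb).2 e2)
    · rintro ⟨⟨hxy, hx, hy, hcomp⟩, hxb, hyb⟩
      refine ⟨hxy, (hm x).2 ⟨hx, hxb⟩, (hm y).2 ⟨hy, hyb⟩, ?_⟩
      intro z hz w hw e1 e2
      exact hcomp z hz w hw ((hcl z hz x hxa hxb).1 e1) ((hcl w hw y hya hyb).1 e2)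
  · -- red away from a
    intro x y hxa hya
    constructor
    · rintro ⟨hxy, hx', hy', ⟨z, hz, w, hw, e1, e2, hadj⟩, hncomp⟩
      obtain ⟨hx, hxb⟩ := (hm x).1 hx'
      obtain ⟨hy, hyb⟩ := (hm y).1 hy'
      refine ⟨⟨hxy, hx, hy,
        ⟨z, hz, w, hw, (hcl z hz x hxa hxb).1 e1, (hcl w hw y hya hyb).1 e2, hadj⟩,
        fun hc => hncomp ?_⟩, hxb, hyb⟩
      intro z' hz' w' hw' f1 f2
      exact hc z' hz' w' hw' ((hcl z' hz' x hxa hxb).1 f1) ((hcl w' hw' y hya hyb).1 f2)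
    · rintro ⟨⟨hxy, hx, hy, ⟨z, hz, w, hw, e1, e2, hadj⟩, hncomp⟩, hxb, hyb⟩
      refine ⟨hxy, (hm x).2 ⟨hx, hxb⟩, (hm y).2 ⟨hy, hyb⟩,
        ⟨z, hz, w, hw, (hcl z hz x hxa hxb).2 e1, (hcl w hw y hya hyb).2 e2, hadj⟩,
        fun hc => hncomp ?_⟩
      intro z' hz' w' hw' f1 f2
      exact hc z' hz' w' hw' ((hcl z' hz' x hxa hxb).2 f1) ((hcl w' hw' y hya hyb).2 f2)
  · -- black at a
    intro x hxa hxb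
    constructor
    · rintro ⟨hax, ha', hx', hcomp⟩
      obtain ⟨hx, -⟩ := (hm x).1 hx'
      refine ⟨⟨hax, ha, hx, ?_⟩, ⟨fun h => hxb h.symm, hb, hx, ?_⟩⟩
      · intro z hz w hw e1 e2
        exact hcomp z hz w hw ((hcla z hz).2 (Or.inl e1)) ((hcl w hw x hxa hxb).2 e2)
      · intro z hz w hw e1 e2
        exact hcomp z hz w hw ((hcla z hz).2 (Or.inr e1)) ((hcl w hw x hxa hxb).2 e2)
    · rintro ⟨⟨hax, -, hx, hcomp1⟩, ⟨-, -, -, hcomp2⟩⟩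
      refine ⟨hax, (hm a).2 ⟨ha, hab⟩, (hm x).2 ⟨hx, hxb⟩, ?_⟩
      intro z hz w hw e1 e2
      have e2' := (hcl w hw x hxa hxb).1 e2
      rcases (hcla z hz).1 e1 with h | h
      · exact hcomp1 z hz w hw h e2'
      · exact hcomp2 z hz w hw h e2'
  · -- red at a
    intro x hxa hxb
    have hxiff : x ∈ s.image (mrg ψ b a) ↔ x ∈ s.image ψ :=
      ⟨fun h => ((hm x).1 h).1, fun h => (hm x).2 ⟨h, hxb⟩⟩
    have hE' : (∃ z ∈ s, ∃ w ∈ s, mrg ψ b a z = a ∧ mrg ψ b a w = x ∧ G.Adj z w) ↔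
        ((∃ z ∈ s, ∃ w ∈ s, ψ z = a ∧ ψ w = x ∧ G.Adj z w) ∨
         (∃ z ∈ s, ∃ w ∈ s, ψ z = b ∧ ψ w = x ∧ G.Adj z w)) := by
      constructor
      · rintro ⟨z, hz, w, hw, e1, e2, hadj⟩
        have e2' := (hcl w hw x hxa hxb).1 e2
        rcases (hcla z hz).1 e1 with h | h
        · exact Or.inl ⟨z, hz, w, hw, h, e2', hadj⟩
        · exact Or.inr ⟨z, hz, w, hw, h, e2', hadj⟩
      · rintro (⟨z, hz, w, hw, e1, e2, hadj⟩ | ⟨z, hz, w, hw, e1, e2, hadj⟩)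
        · exact ⟨z, hz, w, hw, (hcla z hz).2 (Or.inl e1), (hcl w hw x hxa hxb).2 e2, hadj⟩
        · exact ⟨z, hz, w, hw, (hcla z hz).2 (Or.inr e1), (hcl w hw x hxa hxb).2 e2, hadj⟩
    have hC' : (∀ z ∈ s, ∀ w ∈ s, mrg ψ b a z = a → mrg ψ b a w = x → G.Adj z w) ↔
        ((∀ z ∈ s, ∀ w ∈ s, ψ z = a → ψ w = x → G.Adj z w) ∧
         (∀ z ∈ s, ∀ w ∈ s, ψ z = b → ψ w = x → G.Adj z w)) := by
      constructor
      · intro hc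
        constructor
        · intro z hz w hw e1 e2
          exact hc z hz w hw ((hcla z hz).2 (Or.inl e1)) ((hcl w hw x hxa hxb).2 e2)
        · intro z hz w hw e1 e2
          exact hc z hz w hw ((hcla z hz).2 (Or.inr e1)) ((hcl w hw x hxa hxb).2 e2)
      · rintro ⟨hc1, hc2⟩ z hz w hw e1 e2
        have e2' := (hcl w hw x hxa hxb).1 e2
        rcases (hcla z hz).1 e1 with h | h
        · exact hc1 z hz w hw h e2'
        · exact hc2 z hz w hw h e2'
    have hCaEa : x ∈ s.image ψ → (∀ z ∈ s, ∀ w ∈ s, ψ z = a → ψ w = x → G.Adj z w) →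
        (∃ z ∈ s, ∃ w ∈ s, ψ z = a ∧ ψ w = x ∧ G.Adj z w) := by
      intro hx h
      obtain ⟨w, hw, hwx⟩ := Finset.mem_image.1 hx
      exact ⟨a, has, w, hw, hψa, hwx, h a has w hw hψa hwx⟩
    have hCbEb : x ∈ s.image ψ → (∀ z ∈ s, ∀ w ∈ s, ψ z = b → ψ w = x → G.Adj z w) →
        (∃ z ∈ s, ∃ w ∈ s, ψ z = b ∧ ψ w = x ∧ G.Adj z w) := by
      intro hx h
      obtain ⟨w, hw, hwx⟩ := Finset.mem_image.1 hx
      exact ⟨b, hbs, w, hw, hψb, hwx, h b hbs w hw hψb hwx⟩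
    constructor
    · rintro ⟨hax, -, hx', hE, hnc⟩
      have hx := hxiff.1 hx'
      refine ⟨?_, fun ⟨h1, h2⟩ => hnc (hC'.2 ⟨h1.2.2.2, h2.2.2.2⟩)⟩
      rcases hE'.1 hE with hEa | hEb
      · by_cases hca : ∀ z ∈ s, ∀ w ∈ s, ψ z = a → ψ w = x → G.Adj z w
        · exact Or.inl ⟨hax, ha, hx, hca⟩
        · exact Or.inr (Or.inl ⟨hax, ha, hx, hEa, hca⟩)
      · by_cases hcb : ∀ z ∈ s, ∀ w ∈ s, ψ z = b → ψ w = x → G.Adj z w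
        · exact Or.inr (Or.inr (Or.inl ⟨fun h => hxb h.symm, hb, hx, hcb⟩))
        · exact Or.inr (Or.inr (Or.inr ⟨fun h => hxb h.symm, hb, hx, hEb, hcb⟩))
    · rintro ⟨hor, hnand⟩
      have hx : x ∈ s.image ψ := by
        rcases hor with h | h | h | h <;> exact h.2.2.1
      have hEab : (∃ z ∈ s, ∃ w ∈ s, ψ z = a ∧ ψ w = x ∧ G.Adj z w) ∨
          (∃ z ∈ s, ∃ w ∈ s, ψ z = b ∧ ψ w = x ∧ G.Adj z w) := by
        rcases hor with h | h | h | h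
        · exact Or.inl (hCaEa hx h.2.2.2)
        · exact Or.inl h.2.2.2.1
        · exact Or.inr (hCbEb hx h.2.2.2)
        · exact Or.inr h.2.2.2.1
      refine ⟨Ne.symm hxa, (hm a).2 ⟨ha, hab⟩, hxiff.2 hx, hE'.2 hEab, fun hC => ?_⟩
      obtain ⟨hca, hcb⟩ := hC'.1 hC
      exact hnand ⟨⟨Ne.symm hxa, ha, hx, hca⟩, ⟨fun h => hxb h.symm, hb, hx, hcb⟩⟩

lemma quot_id (G : SimpleGraph V) (s : Finset V) : quotT G s id = G.toTrigraphOn s := by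
  have himg : s.image (id : V → V) = s := Finset.image_id
  refine trigraph_ext himg ?_ ?_
  · intro x y
    show (x ≠ y ∧ x ∈ s.image id ∧ y ∈ s.image id ∧ _) ↔ (G.Adj x y ∧ x ∈ s ∧ y ∈ s)
    rw [himg]
    constructor
    · rintro ⟨h1, h2, h3, h4⟩
      exact ⟨h4 x h2 y h3 rfl rfl, h2, h3⟩
    · rintro ⟨h1, h2, h3⟩
      refine ⟨h1.ne, h2, h3, ?_⟩
      rintro z hz w hw rfl rfl
      exact h1
  · intro x y
    show (x ≠ y ∧ _ ∧ _ ∧ (∃ z ∈ s, ∃ w ∈ s, z = x ∧ w = y ∧ G.Adj z w) ∧ _) ↔ False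
    simp only [iff_false]
    rintro ⟨h1, h2, h3, ⟨z, hz, w, hw, e1, e2, hadj⟩, hn⟩
    refine hn fun z' hz' w' hw' f1 f2 => ?_
    have g1 : z' = x := f1
    have g2 : w' = y := f2
    have g3 : z = x := e1
    have g4 : w = y := e2
    rw [g1, g2, ← g3, ← g4]
    exact hadj

end TwwAux2

/-! ### Cayley graph balls and quotient walks -/

namespace TwwAux3
open TwwAux TwwAux2

variable {Γ : Type*} [Group Γ] [DecidableEq Γ]

set_option linter.unusedSectionVars false

def letters (S : Finset Γ) : Finset Γ := S ∪ S.image (fun t : Γ => t⁻¹)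

lemma letters_card (S : Finset Γ) : (letters S).card ≤ 2 * S.card := by
  calc (letters S).card ≤ S.card + (S.image (fun t : Γ => t⁻¹)).card :=
        Finset.card_union_le S (S.image (fun t : Γ => t⁻¹))
    _ ≤ S.card + S.card := by
        have := Finset.card_image_le (s := S) (f := fun t : Γ => t⁻¹)
        omega
    _ = 2 * S.card := by ring

lemma letter_ne_one {S : Finset Γ} (h1 : (1 : Γ) ∉ S) {g : Γ} (hg : g ∈ letters S) : g ≠ 1 := by
  rintro rfl
  rcases Finset.mem_union.1 hg with h | h
  · exact h1 h
  · obtain ⟨t, ht, hte⟩ := Finset.mem_image.1 h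
    rw [inv_eq_one] at hte
    exact h1 (hte ▸ ht)

lemma adj_mul_letter {S : Finset Γ} (h1 : (1 : Γ) ∉ S) {g : Γ} (hg : g ∈ letters S) (x : Γ) :
    (cayley Γ S).Adj x (x * g) := by
  refine ⟨fun h => letter_ne_one h1 hg (left_eq_mul.1 h), ?_⟩
  rcases Finset.mem_union.1 hg with h | h
  · exact ⟨g, h, Or.inl rfl⟩
  · obtain ⟨t, ht, rfl⟩ := Finset.mem_image.1 h
    exact ⟨t, ht, Or.inr (by group)⟩

lemma adj_nbr {S : Finset Γ} {x y : Γ} (hadj : (cayley Γ S).Adj x y) :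
    y ∈ (letters S).image (x * ·) := by
  obtain ⟨hne, t, ht, h | h⟩ := hadj
  · exact Finset.mem_image.2 ⟨t, Finset.mem_union_left _ ht, h.symm⟩
  · refine Finset.mem_image.2 ⟨t⁻¹, Finset.mem_union_right _ (Finset.mem_image.2 ⟨t, ht, rfl⟩), ?_⟩
    rw [h]; group

def ball (S : Finset Γ) (s : Finset Γ) : ℕ → Finset Γ
  | 0 => s
  | j + 1 => ball S s j ∪ (ball S s j).biUnion (fun x => (letters S).image (x * ·))

lemma ball_subset_succ (S s : Finset Γ) (j : ℕ) : ball S s j ⊆ ball S s (j + 1) :=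
  Finset.subset_union_left

lemma ball_subset_ball (S s : Finset Γ) {i j : ℕ} (hij : i ≤ j) : ball S s i ⊆ ball S s j := by
  induction j with
  | zero => simpa [Nat.le_zero.1 hij] using Finset.Subset.refl _
  | succ j ih =>
    rcases Nat.lt_or_ge i (j + 1) with h | h
    · exact (ih (by omega)).trans (ball_subset_succ S s j)
    · have : i = j + 1 := by omega
      subst this; exact Finset.Subset.refl _

lemma subset_ball (S s : Finset Γ) (j : ℕ) : s ⊆ ball S s j := ball_subset_ball S s (Nat.zero_le j)

lemma mul_mem_ball {S s : Finset Γ} {x g : Γ} {j : ℕ} (hx : x ∈ ball S s j)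
    (hg : g ∈ letters S) : x * g ∈ ball S s (j + 1) := by
  exact Finset.mem_union_right _ (Finset.mem_biUnion.2 ⟨x, hx, Finset.mem_image.2 ⟨g, hg, rfl⟩⟩)

/-- Quotient adjacency of parts. -/
def QR (S B : Finset Γ) (φ : Γ → Γ) (p q : Γ) : Prop :=
  p ≠ q ∧ ∃ x ∈ B, ∃ y ∈ B, φ x = p ∧ φ y = q ∧ (cayley Γ S).Adj x y

/-- Parts reachable from `p` in at most `j` quotient steps. -/
noncomputable def Wball (S B : Finset Γ) (φ : Γ → Γ) : ℕ → Γ → Finset Γ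
  | 0, p => {p}
  | j + 1, p => {p} ∪ (B.filter (fun q => QR S B φ p q)).biUnion (fun m => Wball S B φ j m)

lemma Wball_mono (S B : Finset Γ) (φ : Γ → Γ) : ∀ j p, Wball S B φ j p ⊆ Wball S B φ (j + 1) p := by
  intro j
  induction j with
  | zero =>
    intro p
    show ({p} : Finset Γ) ⊆ {p} ∪ _
    exact Finset.subset_union_left
  | succ j ih =>
    intro p
    show ({p} ∪ _ : Finset Γ) ⊆ {p} ∪ _
    refine Finset.union_subset_union (Finset.Subset.refl _) ?_
    intro x hx
    obtain ⟨m, hm, hxm⟩ := Finset.mem_biUnion.1 hx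
    exact Finset.mem_biUnion.2 ⟨m, hm, ih m hxm⟩

lemma mem_Wball_self (S B : Finset Γ) (φ : Γ → Γ) (j : ℕ) (p : Γ) : p ∈ Wball S B φ j p := by
  cases j with
  | zero => exact Finset.mem_singleton_self p
  | succ j => exact Finset.mem_union_left _ (Finset.mem_singleton_self p)

lemma Wball_le (S B : Finset Γ) (φ : Γ → Γ) {i j : ℕ} (hij : i ≤ j) (p : Γ) :
    Wball S B φ i p ⊆ Wball S B φ j p := by
  induction j with
  | zero => simpa [Nat.le_zero.1 hij] using Finset.Subset.refl _
  | succ j ih =>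
    rcases Nat.lt_or_ge i (j + 1) with h | h
    · exact (ih (by omega)).trans (Wball_mono S B φ j p)
    · have : i = j + 1 := by omega
      subst this; exact Finset.Subset.refl _

lemma QR_filter_card {S B : Finset Γ} {φ : Γ → Γ} {d : ℕ} (hgood : Good B φ)
    (hred : (quotT (cayley Γ S) B φ).RedDegLE d) (p : Γ) :
    (B.filter (fun q => QR S B φ p q)).card ≤ 2 * S.card + d := by
  have hfin : {y | (quotT (cayley Γ S) B φ).red p y}.Finite := by
    refine Set.Finite.subset (B.image φ).finite_toSet ?_
    intro y hy
    exact ((quotT (cayley Γ S) B φ).red_mem p y hy).2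
  have hsub : B.filter (fun q => QR S B φ p q) ⊆
      ((letters S).image (p * ·)) ∪ hfin.toFinset := by
    intro q hq
    obtain ⟨hqB, hpq, x, hx, y, hy, hφx, hφy, hadj⟩ := Finset.mem_filter.1 hq
    by_cases hcomp : ∀ z ∈ B, ∀ w ∈ B, φ z = p → φ w = q → (cayley Γ S).Adj z w
    · refine Finset.mem_union_left _ (adj_nbr ?_)
      have hpB : p ∈ B := hφx ▸ hgood.maps x hx
      have hqB' : q ∈ B := hφy ▸ hgood.maps y hy
      have hφp : φ p = p := by rw [← hφx, hgood.idem x hx]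
      have hφq : φ q = q := by rw [← hφy, hgood.idem y hy]
      exact hcomp p hpB q hqB' hφp hφq
    · refine Finset.mem_union_right _ (Set.Finite.mem_toFinset hfin |>.2 ?_)
      exact ⟨hpq, Finset.mem_image.2 ⟨x, hx, hφx⟩, Finset.mem_image.2 ⟨y, hy, hφy⟩,
        ⟨x, hx, y, hy, hφx, hφy, hadj⟩, hcomp⟩
  calc (B.filter (fun q => QR S B φ p q)).card
      ≤ (((letters S).image (p * ·)) ∪ hfin.toFinset).card := Finset.card_le_card hsub
    _ ≤ ((letters S).image (p * ·)).card + hfin.toFinset.card :=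
        Finset.card_union_le ((letters S).image (p * ·)) hfin.toFinset
    _ ≤ (letters S).card + hfin.toFinset.card := by
        have := Finset.card_image_le (s := letters S) (f := (p * ·))
        omega
    _ ≤ 2 * S.card + d := by
        have h1 : (letters S).card ≤ 2 * S.card := letters_card S
        have h2 : hfin.toFinset.card ≤ d := by
          have := hred p
          rwa [Trigraph.redDeg, Set.ncard_eq_toFinset_card _ hfin] at this
        omega

lemma Wball_card {S B : Finset Γ} {φ : Γ → Γ} {d : ℕ} (hgood : Good B φ)
    (hred : (quotT (cayley Γ S) B φ).RedDegLE d) :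
    ∀ j p, (Wball S B φ j p).card ≤ (2 * S.card + d + 1) ^ j := by
  intro j
  induction j with
  | zero => intro p; simp [Wball]
  | succ j ih =>
    intro p
    have hM : 1 ≤ (2 * S.card + d + 1) ^ j := Nat.one_le_pow _ _ (by omega)
    calc (Wball S B φ (j + 1) p).card
        ≤ ({p} : Finset Γ).card +
            ((B.filter (fun q => QR S B φ p q)).biUnion (fun m => Wball S B φ j m)).card :=
          Finset.card_union_le _ _
      _ ≤ 1 + ∑ m ∈ B.filter (fun q => QR S B φ p q), (Wball S B φ j m).card := by
          rw [Finset.card_singleton]; gcongr; exact Finset.card_biUnion_le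
      _ ≤ 1 + (B.filter (fun q => QR S B φ p q)).card * (2 * S.card + d + 1) ^ j := by
          gcongr
          calc ∑ m ∈ B.filter (fun q => QR S B φ p q), (Wball S B φ j m).card
              ≤ (B.filter (fun q => QR S B φ p q)).card • ((2 * S.card + d + 1) ^ j) :=
                Finset.sum_le_card_nsmul _ _ _ (fun m _ => ih m)
            _ = _ := by rw [smul_eq_mul]
      _ ≤ 1 + (2 * S.card + d) * (2 * S.card + d + 1) ^ j := by
          gcongr
          exact QR_filter_card hgood hred p
      _ ≤ (2 * S.card + d + 1) ^ (j + 1) := by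
          rw [pow_succ]
          nlinarith

lemma chain_reach {S s : Finset Γ} {k : ℕ} {φ : Γ → Γ} (h1 : (1 : Γ) ∉ S)
    (hmaps : ∀ x ∈ ball S s k, φ x ∈ ball S s k) :
    ∀ (l : List Γ), (∀ g ∈ l, g ∈ letters S) → ∀ j x, x ∈ ball S s j → j + l.length ≤ k →
      φ (x * l.prod) ∈ Wball S (ball S s k) φ l.length (φ x) := by
  intro l
  induction l with
  | nil =>
    intro hlet j x hx hjk
    simpa using mem_Wball_self S (ball S s k) φ 0 (φ x)
  | cons g l ih =>
    intro hlet j x hx hjk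
    have hjk' : j + l.length + 1 ≤ k := by
      simp only [List.length_cons] at hjk; omega
    have hgl : g ∈ letters S := hlet g List.mem_cons_self
    have hxg : x * g ∈ ball S s (j + 1) := mul_mem_ball hx hgl
    have hrest := ih (fun g' hg' => hlet g' (List.mem_cons_of_mem g hg')) (j + 1) (x * g) hxg
      (by omega)
    have hprod : x * (g :: l).prod = (x * g) * l.prod := by
      rw [List.prod_cons, mul_assoc]
    rw [hprod]
    by_cases heq : φ (x * g) = φ x
    · rw [heq] at hrest
      exact Wball_mono S (ball S s k) φ l.length (φ x) hrest
    · show _ ∈ ({φ x} : Finset Γ) ∪ _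
      refine Finset.mem_union_right _ (Finset.mem_biUnion.2 ⟨φ (x * g), ?_, hrest⟩)
      refine Finset.mem_filter.2 ⟨?_, ?_, ?_⟩
      · exact hmaps _ (ball_subset_ball S s (by omega) hxg)
      · exact fun h => heq h.symm
      · exact ⟨x, ball_subset_ball S s (by omega) hx, x * g,
          ball_subset_ball S s (by omega) hxg, rfl, rfl, adj_mul_letter h1 hgl x⟩

end TwwAux3

/-! ### The transfer argument -/

namespace TwwAux4
open TwwAux TwwAux2 TwwAux3

variable {Γ : Type*} [Group Γ] [DecidableEq Γ]

set_option linter.unusedSectionVars false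

lemma letter_inv {S : Finset Γ} {g : Γ} (hg : g ∈ letters S) : g⁻¹ ∈ letters S := by
  rcases Finset.mem_union.1 hg with h | h
  · exact Finset.mem_union_right _ (Finset.mem_image.2 ⟨g, h, rfl⟩)
  · obtain ⟨t, ht, hte⟩ := Finset.mem_image.1 h
    exact Finset.mem_union_left _ (by rw [← hte, inv_inv]; exact ht)

/-- The key red-degree bound for the transported contraction sequence. -/
lemma red_bound {S S' s : Finset Γ} {k d : ℕ} (h1 : (1 : Γ) ∉ S)
    (hword : ∀ t ∈ S', ∃ l : List Γ, (∀ g ∈ l, g ∈ letters S) ∧ l.prod = t ∧ l.length ≤ k)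
    {φ ψ : Γ → Γ}
    (hφ : Good (ball S s k) φ) (hψ : Good s ψ)
    (hcompat : ∀ x ∈ s, ∀ y ∈ s, (ψ x = ψ y ↔ φ x = φ y))
    (hred : (quotT (cayley Γ S) (ball S s k) φ).RedDegLE d) :
    (quotT (cayley Γ S') s ψ).RedDegLE ((2 * S.card + d + 1) ^ k) := by
  intro a
  rw [Trigraph.redDeg]
  rcases Set.eq_empty_or_nonempty {c | (quotT (cayley Γ S') s ψ).red a c} with hem | hnem
  · simp [hem]
  obtain ⟨c₀, hc₀⟩ := hnem
  have haimg : a ∈ s.image ψ := hc₀.2.1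
  obtain ⟨has, hψa⟩ := rep_self hψ haimg
  have hsub : s ⊆ ball S s k := subset_ball S s k
  have hmapsto : ∀ c ∈ {c | (quotT (cayley Γ S') s ψ).red a c},
      φ c ∈ (↑(Wball S (ball S s k) φ k (φ a)) : Set Γ) := by
    intro c hcmem
    obtain ⟨hac, -, hcimg, ⟨x, hx, y, hy, hψx, hψy, hadj⟩, -⟩ := hcmem
    obtain ⟨hcs, hψc⟩ := rep_self hψ hcimg
    have hφxa : φ x = φ a := (hcompat x hx a has).1 (by rw [hψx, hψa])
    have hφyc : φ y = φ c := (hcompat y hy c hcs).1 (by rw [hψy, hψc])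
    obtain ⟨hxy, t, ht, hcase⟩ := hadj
    obtain ⟨l, hlet, hlprod, hllen⟩ := hword t ht
    have hkey : φ y ∈ Wball S (ball S s k) φ k (φ x) := by
      rcases hcase with h | h
      · -- y = x * t
        have hch := chain_reach h1 hφ.maps l hlet 0 x (by simpa [ball] using hx) (by omega)
        rw [hlprod, ← h] at hch
        exact Wball_le S (ball S s k) φ (by omega) (φ x) hch
      · -- x = y * t, so y = x * t⁻¹
        have hyx : y = x * t⁻¹ := by rw [h]; group
        set l' : List Γ := (l.map (fun g : Γ => g⁻¹)).reverse with hl'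
        have hlet' : ∀ g ∈ l', g ∈ letters S := by
          intro g hg
          rw [hl', List.mem_reverse, List.mem_map] at hg
          obtain ⟨g₀, hg₀, rfl⟩ := hg
          exact letter_inv (hlet g₀ hg₀)
        have hl'prod : l'.prod = t⁻¹ := by
          rw [hl', ← List.prod_inv_reverse, hlprod]
        have hl'len : l'.length ≤ k := by
          rw [hl', List.length_reverse, List.length_map]; exact hllen
        have hch := chain_reach h1 hφ.maps l' hlet' 0 x (by simpa [ball] using hx) (by omega)
        rw [hl'prod, ← hyx] at hch
        exact Wball_le S (ball S s k) φ (by omega) (φ x) hch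
    rw [hφxa, hφyc] at hkey
    exact hkey
  have hinj : Set.InjOn φ {c | (quotT (cayley Γ S') s ψ).red a c} := by
    intro c1 hm1 c2 hm2 hfeq
    obtain ⟨hc1s, hψ1⟩ := rep_self hψ hm1.2.2.1
    obtain ⟨hc2s, hψ2⟩ := rep_self hψ hm2.2.2.1
    have := (hcompat c1 hc1s c2 hc2s).2 hfeq
    rwa [hψ1, hψ2] at this
  calc {c | (quotT (cayley Γ S') s ψ).red a c}.ncard
      ≤ (↑(Wball S (ball S s k) φ k (φ a)) : Set Γ).ncard :=
        Set.ncard_le_ncard_of_injOn φ hmapsto hinj (Finset.finite_toSet _)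
    _ = (Wball S (ball S s k) φ k (φ a)).card := Set.ncard_coe_finset _
    _ ≤ (2 * S.card + d + 1) ^ k := Wball_card hφ hred k (φ a)

lemma seq_card {V : Type*} [DecidableEq V] {f : ℕ → Trigraph V} {n : ℕ}
    (hn : (f n).verts.card = n)
    (hstep : ∀ i, 1 ≤ i → i < n → (f (i + 1)).IsContraction (f i)) :
    ∀ i, 1 ≤ i → i ≤ n → (f i).verts.card = i := by
  have key : ∀ t, t < n → (f (n - t)).verts.card = n - t := by
    intro t
    induction t with
    | zero => intro _; simpa using hn
    | succ t ih =>
      intro ht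
      have h2 : (f (n - t)).verts.card = n - t := ih (by omega)
      obtain ⟨u, v, hC⟩ := hstep (n - (t + 1)) (by omega) (by omega)
      have hsucc : n - (t + 1) + 1 = n - t := by omega
      rw [hsucc] at hC
      have := card_of_contractionAt hC
      rw [h2] at this
      rw [this]
      omega
  intro i hi1 hin
  rcases Nat.eq_or_lt_of_le hin with h | h
  · rw [h]; exact hn
  · have := key (n - i) (by omega)
    rwa [show n - (n - i) = i by omega] at this

lemma main_ind (S S' s : Finset Γ) (k d : ℕ) (h1 : (1 : Γ) ∉ S)
    (hword : ∀ t ∈ S', ∃ l : List Γ, (∀ g ∈ l, g ∈ letters S) ∧ l.prod = t ∧ l.length ≤ k)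
    (f : ℕ → Trigraph Γ)
    (hn : (f (ball S s k).card).verts.card = (ball S s k).card)
    (hstep : ∀ i, 1 ≤ i → i < (ball S s k).card → (f (i + 1)).IsContraction (f i))
    (hredseq : ∀ i, 1 ≤ i → i ≤ (ball S s k).card → (f i).RedDegLE d) :
    ∀ i, 1 ≤ i → i ≤ (ball S s k).card →
      ∀ φ ψ : Γ → Γ, f i = quotT (cayley Γ S) (ball S s k) φ →
      Good (ball S s k) φ → Good s ψ →
      (∀ x ∈ s, ∀ y ∈ s, (ψ x = ψ y ↔ φ x = φ y)) →
      (quotT (cayley Γ S') s ψ).HasSeq ((2 * S.card + d + 1) ^ k) := by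
  have hsub : s ⊆ ball S s k := subset_ball S s k
  intro i hi1
  induction i, hi1 using Nat.le_induction with
  | base =>
    intro hin φ ψ hfφ hφ hψ hcompat
    have hcard1 : (f 1).verts.card = 1 := seq_card hn hstep 1 le_rfl hin
    rw [hfφ] at hcard1
    have hone : ∀ x ∈ ball S s k, ∀ y ∈ ball S s k, φ x = φ y := by
      intro x hx y hy
      exact Finset.card_le_one.1 (le_of_eq hcard1) _
        (Finset.mem_image_of_mem φ hx) _ (Finset.mem_image_of_mem φ hy)
    have himg1 : (s.image ψ).card ≤ 1 := by
      refine Finset.card_le_one.2 ?_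
      intro a ha b hb
      obtain ⟨x, hx, rfl⟩ := Finset.mem_image.1 ha
      obtain ⟨y, hy, rfl⟩ := Finset.mem_image.1 hb
      exact (hcompat x hx y hy).2 (hone x (hsub hx) y (hsub hy))
    exact hasSeq_of_card_le_one _ himg1 _
  | succ i hi ih =>
    intro hin φ ψ hfφ hφ hψ hcompat
    obtain ⟨u, v, hC⟩ := hstep i (by omega) (by omega)
    rw [hfφ] at hC
    have hu : u ∈ (ball S s k).image φ := hC.1
    have hv : v ∈ (ball S s k).image φ := hC.2.1
    have huv : u ≠ v := hC.2.2.1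
    have hQ1 := quot_contract (cayley Γ S) (ball S s k) hφ hu hv huv
    have hfi : f i = quotT (cayley Γ S) (ball S s k) (mrg φ v u) := contraction_unique hC hQ1
    have hφ' : Good (ball S s k) (mrg φ v u) := good_mrg hφ hu huv
    have hrtop : (quotT (cayley Γ S) (ball S s k) φ).RedDegLE d := by
      have := hredseq (i + 1) (by omega) hin
      rwa [hfφ] at this
    by_cases hcase : (∃ x ∈ s, φ x = u) ∧ (∃ y ∈ s, φ y = v)
    · obtain ⟨⟨x₀, hx₀, hx₀u⟩, ⟨y₀, hy₀, hy₀v⟩⟩ := hcase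
      set a := ψ x₀ with hadef
      set b := ψ y₀ with hbdef
      have hab : a ≠ b := by
        intro h
        have := (hcompat x₀ hx₀ y₀ hy₀).1 h
        rw [hx₀u, hy₀v] at this
        exact huv this
      have haimg : a ∈ s.image ψ := Finset.mem_image_of_mem ψ hx₀
      have hbimg : b ∈ s.image ψ := Finset.mem_image_of_mem ψ hy₀
      have hψ' : Good s (mrg ψ b a) := good_mrg hψ haimg hab
      have hQ1' := quot_contract (cayley Γ S') s hψ haimg hbimg hab
      have hxu : ∀ x ∈ s, (ψ x = a ↔ φ x = u) := by
        intro x hx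
        constructor
        · intro h; rw [← hx₀u]; exact (hcompat x hx x₀ hx₀).1 h
        · intro h; exact (hcompat x hx x₀ hx₀).2 (by rw [h, hx₀u])
      have hxv : ∀ x ∈ s, (ψ x = b ↔ φ x = v) := by
        intro x hx
        constructor
        · intro h; rw [← hy₀v]; exact (hcompat x hx y₀ hy₀).1 h
        · intro h; exact (hcompat x hx y₀ hy₀).2 (by rw [h, hy₀v])
      have hcompat' : ∀ x ∈ s, ∀ y ∈ s,
          (mrg ψ b a x = mrg ψ b a y ↔ mrg φ v u x = mrg φ v u y) := by
        intro x hx y hy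
        simp only [mrg]
        by_cases h1x : ψ x = b <;> by_cases h1y : ψ y = b
        · rw [if_pos h1x, if_pos h1y, if_pos ((hxv x hx).1 h1x), if_pos ((hxv y hy).1 h1y)]
          simp
        · have h2y : ¬ φ y = v := fun h => h1y ((hxv y hy).2 h)
          rw [if_pos h1x, if_neg h1y, if_pos ((hxv x hx).1 h1x), if_neg h2y]
          constructor
          · intro h; exact ((hxu y hy).1 h.symm).symm
          · intro h; exact ((hxu y hy).2 h.symm).symm
        · have h2x : ¬ φ x = v := fun h => h1x ((hxv x hx).2 h)
          rw [if_neg h1x, if_pos h1y, if_neg h2x, if_pos ((hxv y hy).1 h1y)]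
          constructor
          · intro h; exact (hxu x hx).1 h
          · intro h; exact (hxu x hx).2 h
        · have h2x : ¬ φ x = v := fun h => h1x ((hxv x hx).2 h)
          have h2y : ¬ φ y = v := fun h => h1y ((hxv y hy).2 h)
          rw [if_neg h1x, if_neg h1y, if_neg h2x, if_neg h2y]
          exact hcompat x hx y hy
      have hred' := red_bound h1 hword hφ hψ hcompat hrtop
      exact hasSeq_step hQ1' hred'
        (ih (by omega) (mrg φ v u) (mrg ψ b a) hfi hφ' hψ' hcompat')
    · have hcompat' : ∀ x ∈ s, ∀ y ∈ s, (ψ x = ψ y ↔ mrg φ v u x = mrg φ v u y) := by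
        rcases not_and_or.1 hcase with hnu | hnv
        · push_neg at hnu
          intro x hx y hy
          simp only [mrg]
          by_cases h1x : φ x = v <;> by_cases h1y : φ y = v
          · rw [if_pos h1x, if_pos h1y]
            exact iff_of_true ((hcompat x hx y hy).2 (h1x.trans h1y.symm)) rfl
          · rw [if_pos h1x, if_neg h1y]
            refine iff_of_false ?_ ?_
            · intro h
              have := (hcompat x hx y hy).1 h
              rw [h1x] at this
              exact h1y this.symm
            · intro h
              exact hnu y hy h.symm
          · rw [if_neg h1x, if_pos h1y]
            refine iff_of_false ?_ ?_
            · intro h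
              have := (hcompat x hx y hy).1 h
              rw [h1y] at this
              exact h1x this
            · intro h
              exact hnu x hx h
          · rw [if_neg h1x, if_neg h1y]
            exact hcompat x hx y hy
        · push_neg at hnv
          intro x hx y hy
          simp only [mrg]
          rw [if_neg (hnv x hx), if_neg (hnv y hy)]
          exact hcompat x hx y hy
      exact ih (by omega) (mrg φ v u) ψ hfi hφ' hψ hcompat'

lemma exists_word_bound (S S' : Finset Γ) (hS : Subgroup.closure (S : Set Γ) = ⊤) :
    ∃ k, ∀ t ∈ S', ∃ l : List Γ, (∀ g ∈ l, g ∈ letters S) ∧ l.prod = t ∧ l.length ≤ k := by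
  have hmem : ∀ t : Γ, ∃ l : List Γ, (∀ g ∈ l, g ∈ letters S) ∧ l.prod = t := by
    intro t
    have ht : t ∈ Subgroup.closure (S : Set Γ) := hS ▸ Subgroup.mem_top t
    induction ht using Subgroup.closure_induction with
    | mem x hx =>
        refine ⟨[x], ?_, by simp⟩
        intro g hg
        rw [List.mem_singleton] at hg
        subst hg
        exact Finset.mem_union_left _ hx
    | one => exact ⟨[], by simp, by simp⟩
    | mul x y hx hy ihx ihy =>
        obtain ⟨l1, hl1, he1⟩ := ihx
        obtain ⟨l2, hl2, he2⟩ := ihy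
        refine ⟨l1 ++ l2, ?_, by simp [he1, he2]⟩
        intro g hg
        rcases List.mem_append.1 hg with h | h
        · exact hl1 g h
        · exact hl2 g h
    | inv x hx ihx =>
        obtain ⟨l, hl, he⟩ := ihx
        refine ⟨(l.map (fun g : Γ => g⁻¹)).reverse, ?_, by rw [← List.prod_inv_reverse, he]⟩
        intro g hg
        rw [List.mem_reverse, List.mem_map] at hg
        obtain ⟨g₀, hg₀, rfl⟩ := hg
        exact letter_inv (hl g₀ hg₀)
  choose F hF1 hF2 using hmem
  refine ⟨S'.sup fun t => (F t).length, fun t ht => ⟨F t, hF1 t, hF2 t, ?_⟩⟩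
  exact Finset.le_sup (f := fun t => (F t).length) ht

lemma direction (S S' : Finset Γ) (hS : Subgroup.closure (S : Set Γ) = ⊤) (h1 : (1 : Γ) ∉ S)
    (h : ∃ d, ∀ s : Finset Γ, ((cayley Γ S).toTrigraphOn s).tww ≤ d) :
    ∃ d', ∀ s : Finset Γ, ((cayley Γ S').toTrigraphOn s).tww ≤ d' := by
  obtain ⟨d, hd⟩ := h
  obtain ⟨k, hword⟩ := exists_word_bound S S' hS
  refine ⟨(2 * S.card + d + 1) ^ k, fun s => ?_⟩
  obtain ⟨f, hfB, hstep, hredseq⟩ := hasSeq_of_tww_le (hd (ball S s k))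
  have hvB : ((cayley Γ S).toTrigraphOn (ball S s k)).verts = ball S s k := rfl
  rcases Nat.eq_zero_or_pos (ball S s k).card with h0 | hpos
  · have hs0 : s.card = 0 := by
      have := Finset.card_le_card (subset_ball S s k)
      omega
    apply tww_le
    exact hasSeq_of_card_le_one _ (by simp [SimpleGraph.toTrigraphOn, hs0]) _
  · apply tww_le
    have hfB' : f (ball S s k).card = (cayley Γ S).toTrigraphOn (ball S s k) := hfB
    have hmain := main_ind S S' s k d h1 hword f
      (by rw [hfB']; rfl)
      (fun i hi hilt => hstep i hi hilt)
      (fun i hi hile => hredseq i hi hile)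
      (ball S s k).card (by omega) le_rfl id id
      (by rw [hfB']; exact (quot_id _ _).symm)
      (good_id _) (good_id _)
      (fun x _ y _ => Iff.rfl)
    rwa [quot_id] at hmain

end TwwAux4

/-- having bounded twin-width for the class of finite induced subgraphs of a
Cayley graph does not depend on the chosen finite generating set. -/
theorem twin_width_group_invariant (Γ : Type*) [Group Γ] [DecidableEq Γ] (S S' : Finset Γ)
    (hS : Subgroup.closure (S : Set Γ) = ⊤) (hS' : Subgroup.closure ((S' : Set Γ)) = ⊤)
    (h1 : (1 : Γ) ∉ S) (h1' : (1 : Γ) ∉ S') :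
    (∃ d, ∀ s : Finset Γ, Trigraph.tww ((cayley Γ S).toTrigraphOn s) ≤ d) ↔
    (∃ d', ∀ s : Finset Γ, Trigraph.tww ((cayley Γ S').toTrigraphOn s) ≤ d') := by
  constructor
  · exact TwwAux4.direction S S' hS h1
  · exact TwwAux4.direction S' S hS' h1'
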